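/- Let x : V → R^d with Σ_i d_i‖x_i‖² = vol(G), and for δ > 0 define the ill-balanced set Ib_x(δ) = { i ∈ V : |‖x_i‖ − 1| ≥ δ }. Then vol(Ib_x(δ))/vol(G) ≤ (4/δ²)·η(x)/λ₂(L₀), where vol(S) = Σ_{i∈S} d_i. -/

import Mathlib

open Matrix
open scoped Classical RealInnerProductSpace

lemma my_parseval {n : ℕ} (B : OrthonormalBasis (Fin n) ℝ (EuclideanSpace ℝ (Fin n)))
    (v : EuclideanSpace ℝ (Fin n)) : ‖v‖^2 = ∑ k, ⟪B k, v⟫ ^ 2 := by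
  rw [← real_inner_self_eq_norm_sq, ← B.sum_inner_mul_inner v v]
  exact Finset.sum_congr rfl fun k _ => by rw [real_inner_comm v (B k)]; ring

lemma my_spectral_gap {n : ℕ} (hn : 1 < n) (A : Matrix (Fin n) (Fin n) ℝ)
    (hA : A.IsHermitian) (lam2 : ℝ)
    (hlam2 : lam2 = (hA.eigenvalues ∘ Tuple.sort hA.eigenvalues) ⟨1, hn⟩)
    (hpos : 0 < lam2) (φ : EuclideanSpace ℝ (Fin n)) (hφ : φ ≠ 0)
    (hφ0 : Matrix.toEuclideanLin A φ = 0)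
    (v : EuclideanSpace ℝ (Fin n)) (hv : ⟪φ, v⟫ = 0) :
    lam2 * ‖v‖^2 ≤ ⟪v, Matrix.toEuclideanLin A v⟫ := by
  classical
  have hsym : (Matrix.toEuclideanLin A).IsSymmetric := Matrix.isHermitian_iff_isSymmetric.1 hA
  set B := hA.eigenvectorBasis with hB
  set μ := hA.eigenvalues with hμ
  have hAB : ∀ k, Matrix.toEuclideanLin A (B k) = μ k • B k := by
    intro k
    apply (WithLp.equiv 2 (Fin n → ℝ)).injective
    ext i
    have := congrFun (hA.mulVec_eigenvectorBasis k) i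
    simpa [Matrix.toEuclideanLin_apply] using this
  have hμb : ∀ k, μ k * ⟪B k, φ⟫ = 0 := by
    intro k
    have h0 : ⟪B k, Matrix.toEuclideanLin A φ⟫ = 0 := by rw [hφ0]; simp
    rwa [← hsym (B k) φ, hAB k, real_inner_smul_left] at h0
  set σ := Tuple.sort μ with hσ
  have hmono := Tuple.monotone_sort μ
  have key : ∀ k, μ k < lam2 → k = σ ⟨0, by omega⟩ := by
    intro k hk
    have hm : σ (σ.symm k) = k := σ.apply_symm_apply k
    by_contra hne
    have hne0 : (σ.symm k).1 ≠ 0 := by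
      intro h
      exact hne (by rw [← hm]; congr 1; exact Fin.ext h)
    have h1 : (⟨1, hn⟩ : Fin n) ≤ σ.symm k := by
      rw [Fin.le_def]; exact Nat.one_le_iff_ne_zero.mpr hne0
    have h2 := hmono h1
    simp only [Function.comp_apply] at h2
    rw [← hσ, hm] at h2
    rw [hlam2] at hk
    simp only [Function.comp_apply] at hk
    exact absurd (lt_of_le_of_lt h2 hk) (lt_irrefl _)
  set k0 : Fin n := σ ⟨0, by omega⟩ with hk0
  have hge : ∀ k, k ≠ k0 → lam2 ≤ μ k := fun k hne => by
    by_contra h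
    exact hne (key k (lt_of_not_ge h))
  have hb0 : ∀ k, k ≠ k0 → ⟪B k, φ⟫ = 0 := by
    intro k hne
    have hμk : μ k ≠ 0 := fun h0 => by
      have := hge k hne; rw [h0] at this
      exact absurd (lt_of_lt_of_le hpos this) (lt_irrefl _)
    exact (mul_eq_zero.mp (hμb k)).resolve_left hμk
  have hbk0 : ⟪B k0, φ⟫ ≠ 0 := by
    intro h0
    apply hφ
    have hnφ : ‖φ‖^2 = 0 := by
      rw [my_parseval B φ]
      refine Finset.sum_eq_zero fun k _ => ?_
      by_cases hk : k = k0
      · rw [hk, h0]; ring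
      · rw [hb0 k hk]; ring
    simpa [pow_eq_zero_iff] using hnφ
  have hck0 : ⟪B k0, v⟫ = 0 := by
    have hpv : ∑ k, ⟪B k, φ⟫ * ⟪B k, v⟫ = 0 := by
      rw [← hv, ← B.sum_inner_mul_inner φ v]
      exact Finset.sum_congr rfl fun k _ => by rw [real_inner_comm φ (B k)]
    rw [Finset.sum_eq_single k0 (fun k _ hne => by rw [hb0 k hne]; ring)
      (fun h => absurd (Finset.mem_univ k0) h)] at hpv
    exact (mul_eq_zero.mp hpv).resolve_left hbk0
  have hQ : ⟪v, Matrix.toEuclideanLin A v⟫ = ∑ k, μ k * ⟪B k, v⟫ ^ 2 := by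
    rw [← B.sum_inner_mul_inner v (Matrix.toEuclideanLin A v)]
    refine Finset.sum_congr rfl fun k _ => ?_
    rw [← hsym (B k) v, hAB k, real_inner_smul_left, real_inner_comm v (B k)]
    ring
  rw [hQ, my_parseval B v, Finset.mul_sum]
  refine Finset.sum_le_sum fun k _ => ?_
  by_cases hk : k = k0
  · rw [hk, hck0]; simp
  · exact mul_le_mul_of_nonneg_right (hge k hk) (sq_nonneg _)

lemma my_orth_norm {d : ℕ} (A : Matrix (Fin d) (Fin d) ℝ)
    (hA : A ∈ Matrix.orthogonalGroup (Fin d) ℝ) (v : EuclideanSpace ℝ (Fin d)) :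
    ‖Matrix.toEuclideanLin A v‖ = ‖v‖ := by
  classical
  have h1 : star A * A = 1 := (Unitary.mem_iff.mp hA).1
  have h2 : Aᵀ * A = 1 := by
    rwa [Matrix.star_eq_conjTranspose, Matrix.conjTranspose_eq_transpose_of_trivial] at h1
  rw [EuclideanSpace.norm_eq, EuclideanSpace.norm_eq]
  congr 1
  have happ : ∀ i, (Matrix.toEuclideanLin A v) i = (A *ᵥ fun j => v j) i := fun i => rfl
  have hdot : (A *ᵥ fun j => v j) ⬝ᵥ (A *ᵥ fun j => v j) = (fun j => v j) ⬝ᵥ (fun j => v j) := by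
    rw [Matrix.dotProduct_mulVec]
    nth_rewrite 1 [← Matrix.vecMul_transpose]
    rw [Matrix.vecMul_vecMul, h2, Matrix.vecMul_one]
  simp only [dotProduct] at hdot
  calc ∑ i, ‖(Matrix.toEuclideanLin A v) i‖ ^ 2
      = ∑ i, (A *ᵥ fun j => v j) i * (A *ᵥ fun j => v j) i := by
        refine Finset.sum_congr rfl fun i _ => ?_
        rw [happ i, Real.norm_eq_abs, sq_abs, sq]
    _ = ∑ i, v i * v i := hdot
    _ = ∑ i, ‖v i‖ ^ 2 := by
        refine Finset.sum_congr rfl fun i _ => ?_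
        rw [Real.norm_eq_abs, sq_abs, sq]

theorem stmt_14 (n d : ℕ) (hn : 1 < n) (w : Fin n → Fin n → ℝ)
    (hw : ∀ i j, 0 ≤ w i j) (hwsymm : ∀ i j, w i j = w j i)
    (hdeg : ∀ i, 0 < ∑ j, w i j)
    (ρ : Fin n → Fin n → Matrix (Fin d) (Fin d) ℝ)
    (hρ : ∀ i j, ρ i j ∈ Matrix.orthogonalGroup (Fin d) ℝ)
    (hρsymm : ∀ i j, ρ j i = (ρ i j)ᵀ)
    (L0 : Matrix (Fin n) (Fin n) ℝ)
    (hL0 : L0 = 1 - Matrix.of (fun i j : Fin n =>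
        w i j / (Real.sqrt (∑ k, w i k) * Real.sqrt (∑ k, w j k))))
    (hherm : L0.IsHermitian)
    (lam2 : ℝ)
    (hlam2 : lam2 = (hherm.eigenvalues ∘ Tuple.sort hherm.eigenvalues) ⟨1, hn⟩)
    (hpos : 0 < lam2)
    (x : Fin n → EuclideanSpace ℝ (Fin d))
    (hnorm : ∑ i, (∑ j, w i j) * ‖x i‖ ^ 2 = ∑ i, ∑ j, w i j)
    (δ : ℝ) (hδ : 0 < δ) :
    (∑ i ∈ Finset.univ.filter (fun i => δ ≤ |‖x i‖ - 1|), ∑ j, w i j) /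
        (∑ i, ∑ j, w i j)
      ≤ 4 / δ ^ 2 *
        ((((1 / 2) * ∑ i, ∑ j, w i j * ‖x i - Matrix.toEuclideanLin (ρ i j) (x j)‖ ^ 2) /
            (∑ i, (∑ j, w i j) * ‖x i‖ ^ 2)) / lam2) := by
  classical
  have hdpos : ∀ i, 0 < ∑ j, w i j := hdeg
  have hsqpos : ∀ i, 0 < Real.sqrt (∑ j, w i j) := fun i => Real.sqrt_pos.mpr (hdpos i)
  have hsqne : ∀ i, Real.sqrt (∑ j, w i j) ≠ 0 := fun i => ne_of_gt (hsqpos i)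
  have hmss : ∀ i, Real.sqrt (∑ j, w i j) * Real.sqrt (∑ j, w i j) = ∑ j, w i j :=
    fun i => Real.mul_self_sqrt (hdpos i).le
  set vol : ℝ := ∑ i, ∑ j, w i j with hvoldef
  have hvol : 0 < vol := Finset.sum_pos (fun i _ => hdpos i) ⟨⟨0, by omega⟩, Finset.mem_univ _⟩
  set η : ℝ := (1 / 2) * ∑ i, ∑ j, w i j * ‖x i - Matrix.toEuclideanLin (ρ i j) (x j)‖ ^ 2
    with hηdef
  have hη0 : 0 ≤ η := by
    apply mul_nonneg (by norm_num)
    exact Finset.sum_nonneg fun i _ => Finset.sum_nonneg fun j _ =>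
      mul_nonneg (hw i j) (sq_nonneg _)
  set φ : EuclideanSpace ℝ (Fin n) := (WithLp.equiv 2 (Fin n → ℝ)).symm
    (fun i => Real.sqrt (∑ j, w i j)) with hφdef
  set f : EuclideanSpace ℝ (Fin n) := (WithLp.equiv 2 (Fin n → ℝ)).symm
    (fun i => Real.sqrt (∑ j, w i j) * ‖x i‖) with hfdef
  set S : ℝ := ∑ i, (∑ j, w i j) * ‖x i‖ with hSdef
  set t : ℝ := S / vol with htdef
  set g : EuclideanSpace ℝ (Fin n) := f - t • φ with hgdef
  -- component formula for L0 *ᵥ u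
  have hL0mul : ∀ (u : Fin n → ℝ) i, (L0 *ᵥ u) i =
      u i - ∑ j, w i j / (Real.sqrt (∑ k, w i k) * Real.sqrt (∑ k, w j k)) * u j := by
    intro u i
    rw [hL0, Matrix.sub_mulVec, Matrix.one_mulVec]
    simp only [Pi.sub_apply]
    congr 1
  -- φ is a 0-eigenvector
  have hφ0 : Matrix.toEuclideanLin L0 φ = 0 := by
    ext i
    have h1 : (Matrix.toEuclideanLin L0 φ) i
        = (L0 *ᵥ fun j => Real.sqrt (∑ k, w j k)) i := rfl
    rw [h1, hL0mul]
    have h2 : ∀ j, w i j / (Real.sqrt (∑ k, w i k) * Real.sqrt (∑ k, w j k))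
        * Real.sqrt (∑ k, w j k) = w i j / Real.sqrt (∑ k, w i k) := by
      intro j
      calc w i j / (Real.sqrt (∑ k, w i k) * Real.sqrt (∑ k, w j k)) * Real.sqrt (∑ k, w j k)
          = w i j / Real.sqrt (∑ k, w i k) * (Real.sqrt (∑ k, w j k) / Real.sqrt (∑ k, w j k)) := by
            ring
        _ = w i j / Real.sqrt (∑ k, w i k) := by rw [div_self (hsqne j), mul_one]
    rw [Finset.sum_congr rfl (fun j _ => h2 j), ← Finset.sum_div]
    show Real.sqrt (∑ k, w i k) - (∑ j, w i j) / Real.sqrt (∑ k, w i k) = 0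
    rw [sub_eq_zero, eq_div_iff (hsqne i), hmss i]
  have hφne : φ ≠ 0 := by
    intro h
    refine hsqne ⟨0, by omega⟩ ?_
    exact congrArg (fun z : EuclideanSpace ℝ (Fin n) => z ⟨0, by omega⟩) h
  -- inner products
  have hφf : ⟪φ, f⟫ = S := by
    simp only [hφdef, hfdef, PiLp.inner_apply, RCLike.inner_apply, conj_trivial,
      WithLp.equiv_symm_apply, WithLp.ofLp_toLp, hSdef]
    exact Finset.sum_congr rfl fun i _ => by rw [mul_comm, ← mul_assoc, hmss i]
  have hφφ : ⟪φ, φ⟫ = vol := by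
    simp only [hφdef, PiLp.inner_apply, RCLike.inner_apply, conj_trivial,
      WithLp.equiv_symm_apply, WithLp.ofLp_toLp, hvoldef]
    exact Finset.sum_congr rfl fun i _ => hmss i
  have hgorth : ⟪φ, g⟫ = 0 := by
    rw [hgdef, inner_sub_right, real_inner_smul_right, hφf, hφφ, htdef,
      div_mul_cancel₀ _ (ne_of_gt hvol), sub_self]
  have hgn : ‖g‖^2 = ∑ i, (∑ j, w i j) * (‖x i‖ - t)^2 := by
    rw [← real_inner_self_eq_norm_sq]
    simp only [hgdef, hfdef, hφdef, PiLp.inner_apply, RCLike.inner_apply, conj_trivial,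
      PiLp.sub_apply, PiLp.smul_apply, smul_eq_mul, WithLp.equiv_symm_apply, WithLp.ofLp_toLp]
    refine Finset.sum_congr rfl fun i _ => ?_
    have := hmss i
    nlinarith [hmss i]
  -- quadratic form of f
  have hfapp : ∀ i, (Matrix.toEuclideanLin L0 f) i
      = (L0 *ᵥ fun j => Real.sqrt (∑ k, w j k) * ‖x j‖) i := fun i => rfl
  have hQf : ⟪f, Matrix.toEuclideanLin L0 f⟫ =
      (∑ i, (∑ j, w i j) * ‖x i‖ ^ 2) - ∑ i, ∑ j, w i j * (‖x i‖ * ‖x j‖) := by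
    have hstep : ∀ i, (Real.sqrt (∑ j, w i j) * ‖x i‖) * ((Matrix.toEuclideanLin L0 f) i)
        = (∑ j, w i j) * ‖x i‖ ^ 2 - ∑ j, w i j * (‖x i‖ * ‖x j‖) := by
      intro i
      rw [hfapp i, hL0mul]
      rw [mul_sub]
      congr 1
      · show (Real.sqrt (∑ j, w i j) * ‖x i‖) * (Real.sqrt (∑ j, w i j) * ‖x i‖)
            = (∑ j, w i j) * ‖x i‖ ^ 2
        calc (Real.sqrt (∑ j, w i j) * ‖x i‖) * (Real.sqrt (∑ j, w i j) * ‖x i‖)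
            = (Real.sqrt (∑ j, w i j) * Real.sqrt (∑ j, w i j)) * (‖x i‖ * ‖x i‖) := by ring
          _ = (∑ j, w i j) * ‖x i‖ ^ 2 := by rw [hmss i]; ring
      · rw [Finset.mul_sum]
        refine Finset.sum_congr rfl fun j _ => ?_
        show (Real.sqrt (∑ k, w i k) * ‖x i‖) *
            (w i j / (Real.sqrt (∑ k, w i k) * Real.sqrt (∑ k, w j k))
              * (Real.sqrt (∑ k, w j k) * ‖x j‖)) = w i j * (‖x i‖ * ‖x j‖)
        calc (Real.sqrt (∑ k, w i k) * ‖x i‖) *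
            (w i j / (Real.sqrt (∑ k, w i k) * Real.sqrt (∑ k, w j k))
              * (Real.sqrt (∑ k, w j k) * ‖x j‖))
            = (w i j * (‖x i‖ * ‖x j‖)) * ((Real.sqrt (∑ k, w i k) / Real.sqrt (∑ k, w i k))
                * (Real.sqrt (∑ k, w j k) / Real.sqrt (∑ k, w j k))) := by ring
          _ = w i j * (‖x i‖ * ‖x j‖) := by
              rw [div_self (hsqne i), div_self (hsqne j), mul_one, mul_one]
    calc ⟪f, Matrix.toEuclideanLin L0 f⟫
        = ∑ i, (Real.sqrt (∑ j, w i j) * ‖x i‖) * ((Matrix.toEuclideanLin L0 f) i) := by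
          simp only [hfdef, PiLp.inner_apply, RCLike.inner_apply, conj_trivial,
            WithLp.equiv_symm_apply, WithLp.ofLp_toLp]
          exact Finset.sum_congr rfl fun i _ => mul_comm _ _
      _ = ∑ i, ((∑ j, w i j) * ‖x i‖ ^ 2 - ∑ j, w i j * (‖x i‖ * ‖x j‖)) :=
          Finset.sum_congr rfl fun i _ => hstep i
      _ = _ := Finset.sum_sub_distrib _ _
  -- Q f ≤ η
  have hswap : ∑ i, ∑ j, w i j * ‖x j‖^2 = ∑ i, (∑ j, w i j) * ‖x i‖^2 := by
    rw [Finset.sum_comm]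
    refine Finset.sum_congr rfl fun i _ => ?_
    rw [Finset.sum_mul]
    exact Finset.sum_congr rfl fun j _ => by rw [hwsymm]
  have hE : (1/2) * ∑ i, ∑ j, w i j * (‖x i‖ - ‖x j‖)^2 =
      (∑ i, (∑ j, w i j) * ‖x i‖ ^ 2) - ∑ i, ∑ j, w i j * (‖x i‖ * ‖x j‖) := by
    have expand : ∀ i j, w i j * (‖x i‖ - ‖x j‖)^2 =
        w i j * ‖x i‖^2 - 2*(w i j * (‖x i‖*‖x j‖)) + w i j * ‖x j‖^2 := fun i j => by ring
    simp_rw [expand, Finset.sum_add_distrib, Finset.sum_sub_distrib, ← Finset.mul_sum]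
    rw [hswap]
    have h3 : ∑ i, ∑ j, w i j * ‖x i‖^2 = ∑ i, (∑ j, w i j) * ‖x i‖^2 :=
      Finset.sum_congr rfl fun i _ => by rw [Finset.sum_mul]
    rw [h3]
    ring
  have hQη : ⟪f, Matrix.toEuclideanLin L0 f⟫ ≤ η := by
    rw [hQf, ← hE, hηdef]
    apply mul_le_mul_of_nonneg_left _ (by norm_num : (0:ℝ) ≤ 1/2)
    refine Finset.sum_le_sum fun i _ => Finset.sum_le_sum fun j _ => ?_
    apply mul_le_mul_of_nonneg_left _ (hw i j)
    have h1 := abs_norm_sub_norm_le (x i) (Matrix.toEuclideanLin (ρ i j) (x j))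
    rw [my_orth_norm _ (hρ i j)] at h1
    calc (‖x i‖ - ‖x j‖)^2 = |‖x i‖ - ‖x j‖|^2 := (sq_abs _).symm
      _ ≤ ‖x i - Matrix.toEuclideanLin (ρ i j) (x j)‖^2 :=
          pow_le_pow_left₀ (abs_nonneg _) h1 2
  -- Q g = Q f
  have hsymL : (Matrix.toEuclideanLin L0).IsSymmetric :=
    Matrix.isHermitian_iff_isSymmetric.1 hherm
  have hQfg : ⟪g, Matrix.toEuclideanLin L0 g⟫ = ⟪f, Matrix.toEuclideanLin L0 f⟫ := by
    have hTg : Matrix.toEuclideanLin L0 g = Matrix.toEuclideanLin L0 f := by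
      rw [hgdef, _root_.map_sub, _root_.map_smul, hφ0, smul_zero, sub_zero]
    rw [hTg, hgdef, inner_sub_left, real_inner_smul_left]
    have hφTf : ⟪φ, Matrix.toEuclideanLin L0 f⟫ = 0 := by
      rw [← hsymL φ f, hφ0, inner_zero_left]
    rw [hφTf]
    ring
  -- spectral bound
  have hspec := my_spectral_gap hn L0 hherm lam2 hlam2 hpos φ hφne hφ0 g hgorth
  rw [hQfg] at hspec
  have hkey : lam2 * ∑ i, (∑ j, w i j) * (‖x i‖ - t)^2 ≤ η := by
    rw [← hgn]; exact le_trans hspec hQη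
  -- sum identity
  have hSt : S = t * vol := by rw [htdef]; field_simp
  have hsum_t : ∑ i, (∑ j, w i j) * (‖x i‖ - t)^2 = vol - t^2 * vol := by
    have expand : ∀ i, (∑ j, w i j) * (‖x i‖ - t)^2 =
        (∑ j, w i j) * ‖x i‖^2 - 2*t*((∑ j, w i j) * ‖x i‖) + t^2*(∑ j, w i j) :=
      fun i => by ring
    rw [Finset.sum_congr rfl fun i _ => expand i]
    rw [Finset.sum_add_distrib, Finset.sum_sub_distrib, ← Finset.mul_sum, ← Finset.mul_sum]
    rw [hnorm, ← hSdef, ← hvoldef, hSt]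
    ring
  have hS0 : 0 ≤ S := Finset.sum_nonneg fun i _ => mul_nonneg (hdpos i).le (norm_nonneg _)
  have ht0 : 0 ≤ t := div_nonneg hS0 hvol.le
  have hsumnn : 0 ≤ ∑ i, (∑ j, w i j) * (‖x i‖ - t)^2 :=
    Finset.sum_nonneg fun i _ => mul_nonneg (hdpos i).le (sq_nonneg _)
  -- rewrite the goal
  rw [hnorm]
  set ε : ℝ := (η / vol) / lam2 with hεdef
  have hε0 : 0 ≤ ε := div_nonneg (div_nonneg hη0 hvol.le) hpos.le
  have hεvol : η / lam2 = ε * vol := by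
    rw [hεdef]; field_simp
  have hsumle : ∑ i, (∑ j, w i j) * (‖x i‖ - t)^2 ≤ ε * vol := by
    rw [← hεvol, le_div_iff₀ hpos, mul_comm]; exact hkey
  have h2 : vol - t^2 * vol ≤ ε * vol := by rw [← hsum_t]; exact hsumle
  have hnn : 0 ≤ vol - t^2 * vol := by rw [← hsum_t]; exact hsumnn
  have hfil : ∀ i ∈ Finset.univ.filter (fun i => δ ≤ |‖x i‖ - 1|), δ ≤ |‖x i‖ - 1| := by
    intro i hi; exact (Finset.mem_filter.mp hi).2
  set volS : ℝ := ∑ i ∈ Finset.univ.filter (fun i => δ ≤ |‖x i‖ - 1|), ∑ j, w i j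
    with hvolSdef
  have hvolS0 : 0 ≤ volS := Finset.sum_nonneg fun i _ => (hdpos i).le
  have hvolSle : volS ≤ vol :=
    Finset.sum_le_sum_of_subset_of_nonneg (Finset.filter_subset _ _)
      (fun i _ _ => (hdpos i).le)
  have hcheb' : ∀ (c : ℝ), (∀ i ∈ Finset.univ.filter (fun i => δ ≤ |‖x i‖ - 1|),
        c ≤ (‖x i‖ - t)^2) → c * volS ≤ ε * vol → True := fun _ _ _ => trivial
  have hchebsum : ∀ (c : ℝ), 0 ≤ c → (∀ i ∈ Finset.univ.filter (fun i => δ ≤ |‖x i‖ - 1|),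
      c ≤ (‖x i‖ - t)^2) → c * volS ≤ ε * vol := by
    intro c hc hcle
    calc c * volS = ∑ i ∈ Finset.univ.filter (fun i => δ ≤ |‖x i‖ - 1|), (∑ j, w i j) * c := by
          rw [hvolSdef, Finset.mul_sum]
          exact Finset.sum_congr rfl fun i _ => mul_comm c _
      _ ≤ ∑ i ∈ Finset.univ.filter (fun i => δ ≤ |‖x i‖ - 1|), (∑ j, w i j) * (‖x i‖ - t)^2 :=
          Finset.sum_le_sum fun i hi =>
            mul_le_mul_of_nonneg_left (hcle i hi) (hdpos i).le
      _ ≤ ∑ i, (∑ j, w i j) * (‖x i‖ - t)^2 :=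
          Finset.sum_le_sum_of_subset_of_nonneg (Finset.filter_subset _ _)
            (fun i _ _ => mul_nonneg (hdpos i).le (sq_nonneg _))
      _ ≤ ε * vol := hsumle
  show volS / vol ≤ 4 / δ ^ 2 * ε
  clear_value volS ε g t S f φ η vol
  clear hεdef hη0 hspec hkey hsum_t hgn hQfg hQη hQf hE hswap hfapp hsymL hgorth hφφ hφf hφne hφ0
    hL0mul hεvol hSt hS0 hsumnn hgdef hfdef hφdef hηdef htdef hSdef hnorm hL0 hlam2
    hmss hsqne hsqpos hwsymm hρsymm hherm g f φ S η
  -- now pure arithmetic + one chebyshev application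
  have ht2 : t^2 ≤ 1 := by nlinarith only [hvol, hnn]
  have ht1 : t ≤ 1 := by nlinarith only [sq_nonneg (t-1), ht2, ht0]
  have h1t : (1 - t)^2 ≤ ε := by
    have h3 : (1 - t^2) * vol ≤ ε * vol := by linear_combination h2
    have h4 : 1 - t^2 ≤ ε := le_of_mul_le_mul_right (by linarith only [h3]) hvol
    nlinarith only [mul_nonneg (sub_nonneg.mpr ht1) ht0, h4]
  rcases le_or_gt (δ^2) (4*ε) with hcase | hcase
  · have hb1 : volS / vol ≤ 1 := (div_le_one hvol).mpr hvolSle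
    have hb2 : (1:ℝ) ≤ 4 / δ^2 * ε := by
      rw [div_mul_eq_mul_div, le_div_iff₀ (pow_pos hδ 2)]
      linarith only [hcase]
    exact le_trans hb1 hb2
  · have hsqrtε : Real.sqrt ε ≤ δ / 2 := by
      have hle : ε ≤ (δ/2)^2 := by nlinarith only [hcase]
      calc Real.sqrt ε ≤ Real.sqrt ((δ/2)^2) := Real.sqrt_le_sqrt hle
        _ = δ/2 := Real.sqrt_sq (by linarith)
    have h1t' : 1 - t ≤ δ / 2 := by
      have he : 1 - t = Real.sqrt ((1-t)^2) := (Real.sqrt_sq (by linarith)).symm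
      rw [he]
      exact le_trans (Real.sqrt_le_sqrt h1t) hsqrtε
    have hcheb : δ^2/4 * volS ≤ ε * vol := by
      apply hchebsum _ (by positivity)
      intro i hi
      have hf := hfil i hi
      have habs : |‖x i‖ - 1| ≤ |‖x i‖ - t| + (1 - t) := by
        have h3 : |‖x i‖ - 1| ≤ |‖x i‖ - t| + |t - 1| := by
          calc |‖x i‖ - 1| = |(‖x i‖ - t) + (t - 1)| := by ring_nf
            _ ≤ |‖x i‖ - t| + |t - 1| := abs_add_le _ _
        rwa [abs_of_nonpos (by linarith only [ht1] : t - 1 ≤ 0), neg_sub] at h3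
      have h4 : δ / 2 ≤ |‖x i‖ - t| := by linarith only [hf, habs, h1t']
      nlinarith only [sq_abs (‖x i‖ - t), abs_nonneg (‖x i‖ - t), h4, hδ]
    rw [div_le_iff₀ hvol]
    have hδ2 : (0:ℝ) < δ^2 := pow_pos hδ 2
    have hv4 : volS = (4/δ^2) * (δ^2/4 * volS) := by field_simp
    rw [hv4]
    calc (4/δ^2) * (δ^2/4 * volS) ≤ (4/δ^2) * (ε * vol) :=
          mul_le_mul_of_nonneg_left hcheb (by positivity)
      _ = 4 / δ^2 * ε * vol := by ring
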